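/- Let 0<ν<1 and μ>0. Define the scalar sequence U^0=1 and, for n≥1, (1+β₀μ)U^n = U^{n-1} − μ Σ_{j=1}^{n-1} β_{n-j} U^j. Let ψ(z) = Γ(1+ν)^{-1}(1 + Σ_{n=1}^∞ ((n+1)^ν − n^ν) e^{-nz}). Then for every complex z with Re z>0, the series Σ_{n=0}^∞ U^n e^{-nz} converges and equals ((1−e^{-z})^{-1} + μψ(z)) / (1 + μψ(z)). -/

import Mathlib

/-- DG weights: `β₀ = 1/Γ(1+ν)`, `β_j = ((j+1)^ν − 2j^ν + (j−1)^ν)/Γ(1+ν)` for `j ≥ 1`. -/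
noncomputable def dgBeta (ν : ℝ) : ℕ → ℝ
  | 0 => 1 / Real.Gamma (1 + ν)
  | j + 1 => (((j : ℝ) + 2) ^ ν - 2 * ((j : ℝ) + 1) ^ ν + (j : ℝ) ^ ν) / Real.Gamma (1 + ν)

/-- The generating function `ψ(z) = Γ(1+ν)⁻¹ (1 + Σ_{n=1}^∞ ((n+1)^ν − n^ν) e^{-nz})`. -/
noncomputable def psiSeries (ν : ℝ) (z : ℂ) : ℂ :=
  ((1 / Real.Gamma (1 + ν) : ℝ) : ℂ) *
    (1 + ∑' n : ℕ, ((((n : ℝ) + 2) ^ ν - ((n : ℝ) + 1) ^ ν : ℝ) : ℂ)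
        * Complex.exp (-(((n : ℕ) + 1 : ℕ) : ℂ) * z))

noncomputable def aSeq (ν : ℝ) (n : ℕ) : ℝ := ((n : ℝ) + 1) ^ ν - (n : ℝ) ^ ν

variable {ν : ℝ}

lemma gammaPos (hν0 : 0 < ν) : 0 < Real.Gamma (1 + ν) :=
  Real.Gamma_pos_of_pos (by linarith)

lemma aSeq_nonneg (hν0 : 0 < ν) (n : ℕ) : 0 ≤ aSeq ν n := by
  have := Real.rpow_le_rpow (x := (n : ℝ)) (y := (n : ℝ) + 1) (n.cast_nonneg)
    (by linarith) hν0.le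
  simpa [aSeq, sub_nonneg] using this

lemma aSeq_antitone (hν0 : 0 < ν) (hν1 : ν < 1) (n : ℕ) : aSeq ν (n + 1) ≤ aSeq ν n := by
  have h := (Real.concaveOn_rpow hν0.le hν1.le).2
    (Set.mem_Ici.2 n.cast_nonneg : (n : ℝ) ∈ Set.Ici 0)
    (Set.mem_Ici.2 (by positivity) : ((n : ℝ) + 2) ∈ Set.Ici 0)
    (by norm_num : (0:ℝ) ≤ 1/2) (by norm_num : (0:ℝ) ≤ 1/2)
    (by norm_num : (1:ℝ)/2 + 1/2 = 1)
  have he : (1/2 : ℝ) • (n : ℝ) + (1/2 : ℝ) • ((n : ℝ) + 2) = (n : ℝ) + 1 := by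
    simp [smul_eq_mul]; ring
  rw [he] at h
  simp only [smul_eq_mul] at h
  simp only [aSeq]
  push_cast
  have h2 : ((n:ℝ) + 1 + 1) = (n:ℝ) + 2 := by ring
  rw [h2]
  linarith

lemma aSeq_zero (hν0 : 0 < ν) : aSeq ν 0 = 1 := by
  simp [aSeq, Real.zero_rpow hν0.ne', Real.one_rpow]

lemma aSeq_le_one (hν0 : 0 < ν) (hν1 : ν < 1) (n : ℕ) : aSeq ν n ≤ 1 := by
  induction n with
  | zero => rw [aSeq_zero hν0]
  | succ n ih => exact le_trans (aSeq_antitone hν0 hν1 n) ih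

lemma dgBeta_succ (n : ℕ) :
    dgBeta ν (n + 1) = (aSeq ν (n + 1) - aSeq ν n) / Real.Gamma (1 + ν) := by
  simp only [dgBeta, aSeq]
  push_cast
  ring_nf

lemma dgBeta_succ_nonpos (hν0 : 0 < ν) (hν1 : ν < 1) (n : ℕ) : dgBeta ν (n + 1) ≤ 0 := by
  rw [dgBeta_succ]
  apply div_nonpos_of_nonpos_of_nonneg _ (gammaPos hν0).le
  linarith [aSeq_antitone hν0 hν1 n]

lemma sum_dgBeta (hν0 : 0 < ν) (n : ℕ) :
    ∑ k ∈ Finset.range (n + 1), dgBeta ν k = aSeq ν n / Real.Gamma (1 + ν) := by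
  induction n with
  | zero => simp [dgBeta, aSeq, Real.one_rpow, Real.zero_rpow hν0.ne', one_div]
  | succ n ih =>
      rw [Finset.sum_range_succ, ih, dgBeta_succ]
      ring

lemma abs_dgBeta_le (hν0 : 0 < ν) (hν1 : ν < 1) (n : ℕ) :
    |dgBeta ν n| ≤ 1 / Real.Gamma (1 + ν) := by
  have hg := gammaPos hν0
  cases n with
  | zero =>
      simp only [dgBeta]
      rw [abs_of_nonneg (by positivity)]
  | succ n =>
      rw [abs_of_nonpos (dgBeta_succ_nonpos hν0 hν1 n), dgBeta_succ]
      rw [neg_div', div_le_div_iff₀ hg hg]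
      have h1 := aSeq_nonneg hν0 (n + 1)
      have h2 := aSeq_le_one hν0 hν1 n
      nlinarith

lemma sum_Icc_reflect (g : ℕ → ℝ) (m : ℕ) :
    ∑ j ∈ Finset.Icc 1 m, g ((m + 1) - j) = ∑ j ∈ Finset.Icc 1 m, g j := by
  refine Finset.sum_nbij' (i := fun a => (m + 1) - a) (j := fun a => (m + 1) - a)
    ?_ ?_ ?_ ?_ ?_ <;> intro a ha <;> simp only [Finset.mem_Icc] at * <;> first | omega | (congr 1)

lemma Ubound (hν0 : 0 < ν) (hν1 : ν < 1) (μ : ℝ) (hμ : 0 < μ) (U : ℕ → ℝ) (hU0 : U 0 = 1)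
    (hUrec : ∀ n : ℕ, 1 ≤ n → (1 + dgBeta ν 0 * μ) * U n
        = U (n - 1) - μ * ∑ j ∈ Finset.Icc 1 (n - 1), dgBeta ν (n - j) * U j) :
    ∀ n, 0 ≤ U n ∧ U n ≤ 1 := by
  intro n
  induction n using Nat.strong_induction_on with
  | _ n ih =>
    match n with
    | 0 => exact ⟨by rw [hU0]; norm_num, le_of_eq hU0⟩
    | m + 1 =>
      have hg := gammaPos hν0
      have hb0 : dgBeta ν 0 = 1 / Real.Gamma (1 + ν) := rfl
      have hb0pos : 0 < dgBeta ν 0 := by rw [hb0]; positivity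
      have hpos : 0 < 1 + dgBeta ν 0 * μ := by nlinarith
      have hrec := hUrec (m + 1) (Nat.le_add_left 1 m)
      simp only [Nat.add_sub_cancel] at hrec
      have hterm : ∀ j ∈ Finset.Icc 1 m, dgBeta ν ((m + 1) - j) * U j ≤ 0 ∧
          dgBeta ν ((m + 1) - j) ≤ dgBeta ν ((m + 1) - j) * U j := by
        intro j hj
        obtain ⟨hj1, hj2⟩ := Finset.mem_Icc.1 hj
        obtain ⟨k, hk⟩ : ∃ k, (m + 1) - j = k + 1 := ⟨m - j, by omega⟩
        have hbj : dgBeta ν ((m + 1) - j) ≤ 0 := by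
          rw [hk]; exact dgBeta_succ_nonpos hν0 hν1 k
        have hUj := ih j (by omega)
        exact ⟨mul_nonpos_of_nonpos_of_nonneg hbj hUj.1,
          by nlinarith [hUj.1, hUj.2]⟩
      have hT0 : (∑ j ∈ Finset.Icc 1 m, dgBeta ν ((m + 1) - j) * U j) ≤ 0 :=
        Finset.sum_nonpos fun j hj => (hterm j hj).1
      have hTlb : -(dgBeta ν 0) ≤ ∑ j ∈ Finset.Icc 1 m, dgBeta ν ((m + 1) - j) * U j := by
        have h1 : (∑ j ∈ Finset.Icc 1 m, dgBeta ν ((m + 1) - j))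
            ≤ ∑ j ∈ Finset.Icc 1 m, dgBeta ν ((m + 1) - j) * U j :=
          Finset.sum_le_sum fun j hj => (hterm j hj).2
        have h2 : ∑ j ∈ Finset.Icc 1 m, dgBeta ν ((m + 1) - j)
            = ∑ j ∈ Finset.Icc 1 m, dgBeta ν j := sum_Icc_reflect _ m
        have h3 : dgBeta ν 0 + ∑ j ∈ Finset.Icc 1 m, dgBeta ν j
            = aSeq ν m / Real.Gamma (1 + ν) := by
          rw [← sum_dgBeta hν0 m, Finset.range_eq_Ico,
            Finset.sum_eq_sum_Ico_succ_bot (by omega : 0 < m + 1) (dgBeta ν),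
            Finset.Ico_add_one_right_eq_Icc]
        have h4 : 0 ≤ aSeq ν m / Real.Gamma (1 + ν) := by
          have := aSeq_nonneg hν0 m; positivity
        linarith
      have hUm := ih m (by omega)
      constructor
      · nlinarith [hrec, hUm.1]
      · nlinarith [hrec, hUm.2]

lemma Urec' (hν0 : 0 < ν) (μ : ℝ) (U : ℕ → ℝ) (hU0 : U 0 = 1)
    (hUrec : ∀ n : ℕ, 1 ≤ n → (1 + dgBeta ν 0 * μ) * U n
        = U (n - 1) - μ * ∑ j ∈ Finset.Icc 1 (n - 1), dgBeta ν (n - j) * U j) :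
    ∀ n : ℕ, U (n + 1) = U n
      - μ * ((∑ j ∈ Finset.range (n + 2), dgBeta ν ((n + 1) - j) * U j) - dgBeta ν (n + 1)) := by
  intro n
  have hrec := hUrec (n + 1) (Nat.le_add_left 1 n)
  simp only [Nat.add_sub_cancel] at hrec
  have hS : ∑ j ∈ Finset.range (n + 2), dgBeta ν ((n + 1) - j) * U j
      = dgBeta ν (n + 1) + (∑ j ∈ Finset.Icc 1 n, dgBeta ν ((n + 1) - j) * U j)
        + dgBeta ν 0 * U (n + 1) := by
    rw [Finset.sum_range_succ]
    simp only [Nat.sub_self]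
    rw [Finset.range_eq_Ico,
      Finset.sum_eq_sum_Ico_succ_bot (by omega : 0 < n + 1)
        (fun j => dgBeta ν ((n + 1) - j) * U j),
      Finset.Ico_add_one_right_eq_Icc]
    simp only [Nat.sub_zero, hU0, mul_one]
  rw [hS]
  linarith [hrec]

theorem stmt17 (ν : ℝ) (hν0 : 0 < ν) (hν1 : ν < 1) (μ : ℝ) (hμ : 0 < μ)
    (U : ℕ → ℝ) (hU0 : U 0 = 1)
    (hUrec : ∀ n : ℕ, 1 ≤ n →
      (1 + dgBeta ν 0 * μ) * U n
        = U (n - 1) - μ * ∑ j ∈ Finset.Icc 1 (n - 1), dgBeta ν (n - j) * U j)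
    (z : ℂ) (hz : 0 < z.re) :
    Summable (fun n : ℕ => (U n : ℂ) * Complex.exp (-(n : ℂ) * z)) ∧
    ∑' n : ℕ, (U n : ℂ) * Complex.exp (-(n : ℂ) * z)
      = ((1 - Complex.exp (-z))⁻¹ + (μ : ℂ) * psiSeries ν z)
          / (1 + (μ : ℂ) * psiSeries ν z) := by
  have hg := gammaPos hν0
  set x : ℂ := Complex.exp (-z) with hxdef
  have hxpow : ∀ n : ℕ, Complex.exp (-(n : ℂ) * z) = x ^ n := by
    intro n
    rw [hxdef, ← Complex.exp_nat_mul]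
    congr 1; ring
  have hxnorm : ‖x‖ < 1 := by
    rw [hxdef, Complex.norm_exp]
    rw [Real.exp_lt_one_iff]
    simpa using hz
  have hxne : x ≠ 0 := Complex.exp_ne_zero _
  have hx1 : (1 : ℂ) - x ≠ 0 := by
    intro h
    have hx : x = 1 := by linear_combination -h
    rw [hx] at hxnorm; simp at hxnorm
  set f : ℕ → ℂ := fun n => (U n : ℂ) * x ^ n with hfdef
  set b : ℕ → ℂ := fun n => (dgBeta ν n : ℂ) * x ^ n with hbdef
  set aC : ℕ → ℂ := fun n => ((aSeq ν n : ℝ) : ℂ) * x ^ n with haCdef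
  have hUb := Ubound hν0 hν1 μ hμ U hU0 hUrec
  have hgeo : Summable (fun n : ℕ => ‖x‖ ^ n) :=
    summable_geometric_of_lt_one (norm_nonneg _) hxnorm
  have hfn : Summable fun n => ‖f n‖ := by
    refine Summable.of_nonneg_of_le (fun n => norm_nonneg _) (fun n => ?_) hgeo
    simp only [hfdef, norm_mul, norm_pow, Complex.norm_real]
    have h1 : |U n| ≤ 1 := abs_le.2 ⟨by linarith [(hUb n).1], (hUb n).2⟩
    calc |U n| * ‖x‖ ^ n ≤ 1 * ‖x‖ ^ n := by
          apply mul_le_mul_of_nonneg_right h1 (by positivity)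
      _ = ‖x‖ ^ n := one_mul _
  have hbn : Summable fun n => ‖b n‖ := by
    refine Summable.of_nonneg_of_le (fun n => norm_nonneg _) (fun n => ?_)
      (hgeo.mul_left (1 / Real.Gamma (1 + ν)))
    simp only [hbdef, norm_mul, norm_pow, Complex.norm_real]
    exact mul_le_mul_of_nonneg_right (abs_dgBeta_le hν0 hν1 n) (by positivity)
  have han : Summable fun n => ‖aC n‖ := by
    refine Summable.of_nonneg_of_le (fun n => norm_nonneg _) (fun n => ?_) hgeo
    simp only [haCdef, norm_mul, norm_pow, Complex.norm_real]
    have h1 : |aSeq ν n| ≤ 1 :=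
      abs_le.2 ⟨by linarith [aSeq_nonneg hν0 n], aSeq_le_one hν0 hν1 n⟩
    calc |aSeq ν n| * ‖x‖ ^ n ≤ 1 * ‖x‖ ^ n :=
          mul_le_mul_of_nonneg_right h1 (by positivity)
      _ = ‖x‖ ^ n := one_mul _
  have hsf : Summable f := hfn.of_norm
  have hsb : Summable b := hbn.of_norm
  have hsa : Summable aC := han.of_norm
  set c : ℕ → ℂ := fun n => ∑ kl ∈ Finset.HasAntidiagonal.antidiagonal n, f kl.1 * b kl.2 with hcdef
  have hsc : Summable c := (summable_norm_sum_mul_antidiagonal_of_summable_norm hfn hbn).of_norm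
  have hcauchy : (∑' n, f n) * (∑' n, b n) = ∑' n, c n :=
    tsum_mul_tsum_eq_tsum_sum_antidiagonal_of_summable_norm hfn hbn
  have hc0 : c 0 = (dgBeta ν 0 : ℂ) := by
    simp [hcdef, hfdef, hbdef, hU0]
  have hf0 : f 0 = 1 := by simp [hfdef, hU0]
  have hcsucc : ∀ n : ℕ, c (n + 1)
      = ((∑ j ∈ Finset.range (n + 2), dgBeta ν ((n + 1) - j) * U j : ℝ) : ℂ) * x ^ (n + 1) := by
    intro n
    simp only [hcdef]
    rw [Finset.Nat.sum_antidiagonal_eq_sum_range_succ (fun i j => f i * b j)]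
    push_cast
    rw [Finset.sum_mul]
    refine Finset.sum_congr rfl fun k hk => ?_
    have hk' : k ≤ n + 1 := by
      have := Finset.mem_range.mp hk; omega
    have hxp : x ^ k * x ^ (n + 1 - k) = x ^ (n + 1) := by
      rw [← pow_add]; congr 1; omega
    simp only [hfdef, hbdef]
    calc (U k : ℂ) * x ^ k * ((dgBeta ν (n + 1 - k) : ℂ) * x ^ (n + 1 - k))
        = (dgBeta ν (n + 1 - k) : ℂ) * (U k : ℂ) * (x ^ k * x ^ (n + 1 - k)) := by ring
      _ = (dgBeta ν (n + 1 - k) : ℂ) * (U k : ℂ) * x ^ (n + 1) := by rw [hxp]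
  have hUr := Urec' hν0 μ U hU0 hUrec
  have hkey : ∀ n : ℕ, f (n + 1) = x * f n - (μ : ℂ) * (c (n + 1) - b (n + 1)) := by
    intro n
    rw [hcsucc n]
    simp only [hfdef, hbdef]
    rw [hUr n]
    push_cast
    ring
  have hsb1 : Summable fun n => b (n + 1) := (summable_nat_add_iff 1).2 hsb
  have hsc1 : Summable fun n => c (n + 1) := (summable_nat_add_iff 1).2 hsc
  have hsa1 : Summable fun n => aC (n + 1) := (summable_nat_add_iff 1).2 hsa
  set F := ∑' n, f n with hF
  set B := ∑' n, b n with hB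
  have hb0c : b 0 = (dgBeta ν 0 : ℂ) := by simp [hbdef]
  have haC0 : aC 0 = 1 := by simp [haCdef, aSeq_zero hν0]
  have hfs : ∑' n, f (n + 1) = F - 1 := by
    rw [hF, Summable.tsum_eq_zero_add hsf, hf0]; ring
  have hcs : ∑' n, c (n + 1) = (F * B) - (dgBeta ν 0 : ℂ) := by
    rw [hF, hB, hcauchy, Summable.tsum_eq_zero_add hsc, hc0]; ring
  have hbs : ∑' n, b (n + 1) = B - (dgBeta ν 0 : ℂ) := by
    rw [hB, Summable.tsum_eq_zero_add hsb, hb0c]; ring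
  have heq0 : F - 1 = x * F - (μ : ℂ) * ((F * B - (dgBeta ν 0 : ℂ)) - (B - (dgBeta ν 0 : ℂ))) := by
    rw [← hfs]
    calc ∑' n, f (n + 1)
        = ∑' n, (x * f n - (μ : ℂ) * (c (n + 1) - b (n + 1))) := tsum_congr hkey
      _ = (∑' n, x * f n) - ∑' n, (μ : ℂ) * (c (n + 1) - b (n + 1)) :=
          Summable.tsum_sub (hsf.mul_left x) ((hsc1.sub hsb1).mul_left _)
      _ = x * F - (μ : ℂ) * ((∑' n, c (n + 1)) - ∑' n, b (n + 1)) := by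
          rw [tsum_mul_left, tsum_mul_left, Summable.tsum_sub hsc1 hsb1, hF]
      _ = _ := by rw [hcs, hbs]
  have heq : F * (1 - x + (μ : ℂ) * B) = 1 + (μ : ℂ) * B := by linear_combination heq0
  set A := ∑' n, aC n with hA
  have hA1 : ∑' n, aC (n + 1) = A - 1 := by
    rw [hA, Summable.tsum_eq_zero_add hsa, haC0]; ring
  have hψ : psiSeries ν z = ((1 / Real.Gamma (1 + ν) : ℝ) : ℂ) * A := by
    rw [psiSeries]
    congr 1
    have hterm : ∀ n : ℕ, ((((n : ℝ) + 2) ^ ν - ((n : ℝ) + 1) ^ ν : ℝ) : ℂ)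
        * Complex.exp (-(((n : ℕ) + 1 : ℕ) : ℂ) * z) = aC (n + 1) := by
      intro n
      rw [hxpow (n + 1)]
      simp only [haCdef]
      congr 2
      have h2 : aSeq ν (n + 1) = ((n : ℝ) + 2) ^ ν - ((n : ℝ) + 1) ^ ν := by
        simp only [aSeq]
        push_cast
        rw [show ((n : ℝ) + 1 + 1) = (n : ℝ) + 2 from by ring]
      rw [h2]
    rw [tsum_congr hterm, hA1]
    ring
  have hbsucc : ∀ n : ℕ, b (n + 1)
      = ((1 / Real.Gamma (1 + ν) : ℝ) : ℂ) * (aC (n + 1) - x * aC n) := by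
    intro n
    simp only [hbdef, haCdef, dgBeta_succ]
    push_cast
    ring
  have hBA : B = ((1 / Real.Gamma (1 + ν) : ℝ) : ℂ) * (A - x * A) := by
    have h1 : ∑' n, b (n + 1)
        = ((1 / Real.Gamma (1 + ν) : ℝ) : ℂ) * ((A - 1) - x * A) := by
      rw [tsum_congr hbsucc, tsum_mul_left]
      congr 1
      rw [Summable.tsum_sub hsa1 (hsa.mul_left x), hA1, tsum_mul_left, hA]
    have h2 : B = b 0 + ∑' n, b (n + 1) := by rw [hB, Summable.tsum_eq_zero_add hsb]
    have hb00 : (dgBeta ν 0 : ℂ) = ((1 / Real.Gamma (1 + ν) : ℝ) : ℂ) := by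
      norm_num [dgBeta]
    rw [h2, h1, hb0c, hb00]
    ring
  have hBψ : B = (1 - x) * psiSeries ν z := by rw [hψ, hBA]; ring
  have hden : (1 : ℂ) + (μ : ℂ) * psiSeries ν z ≠ 0 := by
    intro h0
    have hμψ : (μ : ℂ) * psiSeries ν z = -1 := by linear_combination h0
    rw [hBψ] at heq
    exact hxne (by linear_combination -heq + (F - 1) * (1 - x) * hμψ)
  have hfinal : F = ((1 - x)⁻¹ + (μ : ℂ) * psiSeries ν z) / (1 + (μ : ℂ) * psiSeries ν z) := by
    rw [eq_div_iff hden]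
    have hinv : (1 - x) * (1 - x)⁻¹ = 1 := mul_inv_cancel₀ hx1
    rw [hBψ] at heq
    linear_combination (1 - x)⁻¹ * heq
      - (F + F * (μ : ℂ) * psiSeries ν z - (μ : ℂ) * psiSeries ν z) * hinv
  have hrw : (fun n : ℕ => (U n : ℂ) * Complex.exp (-(n : ℂ) * z)) = f := by
    funext n; rw [hxpow n]
  refine ⟨by rw [hrw]; exact hsf, ?_⟩
  calc ∑' n : ℕ, (U n : ℂ) * Complex.exp (-(n : ℂ) * z) = F := by
        rw [hF]; exact tsum_congr fun n => by rw [hxpow n]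
    _ = _ := hfinal
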